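/- Let γ > 0 and let X ⊆ ℝ^d be a set whose γ-adapted-dimension is k_γ(X), i.e. k_γ(X) is the minimal natural number k such that X is (γ²k, k)-limited. Then any finite sequence of distinct points of X that is γ-shattered by unit-norm linear separators has size at most 3·k_γ(X) + 1. -/

import Mathlib

open scoped RealInnerProductSpace

/-- A set `X ⊆ ℝ^d` is `(b,k)`-limited: there is a subspace `V` of dimension `d - k`
whose orthogonal projection `P` satisfies `‖Px‖² ≤ b` for every `x ∈ X`. -/
def IsLimitedSet {d : ℕ} (b : ℝ) (k : ℕ) (X : Set (EuclideanSpace ℝ (Fin d))) : Prop :=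
  ∃ V : Submodule ℝ (EuclideanSpace ℝ (Fin d)), Module.finrank ℝ V = d - k ∧
    ∀ x ∈ X, ‖(V.orthogonalProjection x : EuclideanSpace ℝ (Fin d))‖ ^ 2 ≤ b

/-- A finite sequence `x₁,…,x_m` is `γ`-shattered by unit-norm linear separators. -/
def GammaShattered {d m : ℕ} (γ : ℝ) (x : Fin m → EuclideanSpace ℝ (Fin d)) : Prop :=
  ∃ r : Fin m → ℝ, ∀ y : Fin m → ℝ, (∀ i, y i = 1 ∨ y i = -1) →
    ∃ w : EuclideanSpace ℝ (Fin d), ‖w‖ ≤ 1 ∧ ∀ i, γ ≤ y i * (⟪w, x i⟫ - r i)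

open Finset

noncomputable def sgn {m : ℕ} (ε : Fin m → Bool) (j : Fin m) : ℝ := if ε j then 1 else -1

lemma sgn_sq {m : ℕ} (ε : Fin m → Bool) (j : Fin m) : sgn ε j * sgn ε j = 1 := by
  unfold sgn; split <;> norm_num

lemma sgn_abs {m : ℕ} (ε : Fin m → Bool) (j : Fin m) : |sgn ε j| = 1 := by
  unfold sgn; split <;> norm_num

lemma sum_sgn_mul_sgn {m : ℕ} {j j' : Fin m} (h : j ≠ j') :
    ∑ ε : Fin m → Bool, sgn ε j * sgn ε j' = 0 := by
  classical
  apply Finset.sum_ninvolution (fun ε => Function.update ε j (!(ε j)))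
  · intro ε
    have h1 : Function.update ε j (!(ε j)) j = !(ε j) := by simp
    have h2 : Function.update ε j (!(ε j)) j' = ε j' := by
      simp [Function.update_of_ne (Ne.symm h)]
    unfold sgn
    rw [h1, h2]
    cases ε j <;> simp <;> split <;> norm_num
  · intro ε _
    intro hc
    have := congrFun hc j
    simp at this
  · intro a; exact Finset.mem_univ _
  · intro ε
    funext i
    by_cases hi : i = j
    · subst hi; simp
    · simp [Function.update_of_ne hi]

lemma sum_sgn_mul_sgn' {m : ℕ} (j j' : Fin m) :
    ∑ ε : Fin m → Bool, sgn ε j * sgn ε j' = if j = j' then (2:ℝ)^m else 0 := by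
  split
  · next h =>
      subst h
      simp only [sgn_sq]
      simp [Finset.card_univ]
  · next h => exact sum_sgn_mul_sgn h

lemma sum_norm_sq_sgn_smul {m : ℕ} {F : Type*} [NormedAddCommGroup F] [InnerProductSpace ℝ F]
    (w : Fin m → F) :
    ∑ ε : Fin m → Bool, ‖∑ j, sgn ε j • w j‖ ^ 2 = 2 ^ m * ∑ j, ‖w j‖ ^ 2 := by
  have expand : ∀ ε : Fin m → Bool, ‖∑ j, sgn ε j • w j‖ ^ 2
      = ∑ j, ∑ j', (sgn ε j * sgn ε j') * ⟪w j, w j'⟫ := by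
    intro ε
    rw [← real_inner_self_eq_norm_sq, sum_inner]
    refine Finset.sum_congr rfl fun j _ => ?_
    rw [inner_sum]
    refine Finset.sum_congr rfl fun j' _ => ?_
    rw [real_inner_smul_left, real_inner_smul_right]
    ring
  simp_rw [expand]
  rw [Finset.sum_comm]
  have : ∀ j : Fin m, ∑ ε : Fin m → Bool, ∑ j', (sgn ε j * sgn ε j') * ⟪w j, w j'⟫
      = 2 ^ m * ⟪w j, w j⟫ := by
    intro j
    rw [Finset.sum_comm]
    have : ∀ j' : Fin m, ∑ ε : Fin m → Bool, (sgn ε j * sgn ε j') * ⟪w j, w j'⟫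
        = (if j = j' then (2:ℝ)^m else 0) * ⟪w j, w j'⟫ := by
      intro j'
      rw [← Finset.sum_mul, sum_sgn_mul_sgn' j j']
    simp_rw [this]
    simp [ite_mul]
  simp_rw [this]
  rw [← Finset.mul_sum]
  congr 1
  exact Finset.sum_congr rfl fun j _ => real_inner_self_eq_norm_sq _

lemma sum_coord_sq {m : ℕ} (a : EuclideanSpace ℝ (Fin m)) :
    ∑ j, (a j) ^ 2 = ‖a‖ ^ 2 := by
  rw [← real_inner_self_eq_norm_sq]
  rw [PiLp.inner_apply]
  refine Finset.sum_congr rfl fun j _ => ?_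
  simp [RCLike.inner_apply, sq]

lemma sum_norm_sq_proj_single {m : ℕ} (L : Submodule ℝ (EuclideanSpace ℝ (Fin m))) :
    ∑ j, ‖(Submodule.orthogonalProjection L (EuclideanSpace.single j 1) : EuclideanSpace ℝ (Fin m))‖ ^ 2
      = Module.finrank ℝ L := by
  set b := stdOrthonormalBasis ℝ L
  have key : ∀ j : Fin m,
      ‖(Submodule.orthogonalProjection L (EuclideanSpace.single j 1) : EuclideanSpace ℝ (Fin m))‖ ^ 2
        = ∑ i, ((b i : EuclideanSpace ℝ (Fin m)) j) ^ 2 := by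
    intro j
    set p := Submodule.orthogonalProjection L (EuclideanSpace.single j 1) with hp
    have h1 : ‖(p : EuclideanSpace ℝ (Fin m))‖ ^ 2 = ‖p‖ ^ 2 := by
      rw [Submodule.norm_coe]
    rw [h1, ← real_inner_self_eq_norm_sq, ← b.sum_inner_mul_inner p p]
    refine Finset.sum_congr rfl fun i _ => ?_
    have h2 : ⟪p, b i⟫ = (b i : EuclideanSpace ℝ (Fin m)) j := by
      rw [hp, Submodule.inner_orthogonalProjectionOnto_eq_of_mem_right]
      rw [EuclideanSpace.inner_single_left]
      simp
    have h2' : ⟪b i, p⟫ = (b i : EuclideanSpace ℝ (Fin m)) j := by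
      rw [real_inner_comm]; exact h2
    rw [h2', h2]
    ring
  simp_rw [key]
  rw [Finset.sum_comm]
  have : ∀ i, ∑ j, ((b i : EuclideanSpace ℝ (Fin m)) j) ^ 2 = 1 := by
    intro i
    rw [sum_coord_sq, Submodule.norm_coe]
    simp [b.orthonormal.1 i]
  simp [this]

noncomputable def prL {m : ℕ} (L : Submodule ℝ (EuclideanSpace ℝ (Fin m))) :
    EuclideanSpace ℝ (Fin m) →L[ℝ] EuclideanSpace ℝ (Fin m) :=
  L.subtypeL.comp (Submodule.orthogonalProjection L)

lemma prL_apply {m : ℕ} (L : Submodule ℝ (EuclideanSpace ℝ (Fin m)))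
    (a : EuclideanSpace ℝ (Fin m)) :
    prL L a = (Submodule.orthogonalProjection L a : EuclideanSpace ℝ (Fin m)) := rfl

lemma prL_mem {m : ℕ} (L : Submodule ℝ (EuclideanSpace ℝ (Fin m)))
    (a : EuclideanSpace ℝ (Fin m)) : prL L a ∈ L := by
  rw [prL_apply]; exact SetLike.coe_mem _

lemma norm_prL_le {m : ℕ} (L : Submodule ℝ (EuclideanSpace ℝ (Fin m)))
    (a : EuclideanSpace ℝ (Fin m)) : ‖prL L a‖ ≤ ‖a‖ := by
  have h1 : ‖prL L a‖ = ‖Submodule.orthogonalProjection L a‖ := rfl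
  rw [h1]
  calc ‖Submodule.orthogonalProjection L a‖ ≤ ‖Submodule.orthogonalProjection L‖ * ‖a‖ :=
        (Submodule.orthogonalProjection L).le_opNorm a
    _ ≤ ‖a‖ := by
        nlinarith [Submodule.orthogonalProjectionOnto_norm_le L, norm_nonneg a,
          norm_nonneg (Submodule.orthogonalProjection L a)]

lemma inner_prL_self {m : ℕ} (L : Submodule ℝ (EuclideanSpace ℝ (Fin m)))
    (a : EuclideanSpace ℝ (Fin m)) : ⟪prL L a, a⟫ = ‖prL L a‖ ^ 2 := by
  set p : EuclideanSpace ℝ (Fin m) := prL L a with hp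
  have hmem : p ∈ L := prL_mem L a
  have horth : ⟪a - p, p⟫ = 0 := Submodule.starProjection_inner_eq_zero (K := L) a p hmem
  have : ⟪p, a⟫ = ⟪p, p⟫ + ⟪a - p, p⟫ := by
    rw [inner_sub_left, real_inner_comm p a]; ring
  rw [this, horth, real_inner_self_eq_norm_sq]; ring

lemma prL_selfadj {m : ℕ} (L : Submodule ℝ (EuclideanSpace ℝ (Fin m)))
    (a b : EuclideanSpace ℝ (Fin m)) : ⟪prL L a, b⟫ = ⟪a, prL L b⟫ :=
  Submodule.inner_starProjection_left_eq_right (K := L) a b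

lemma prL_trace {m : ℕ} (L : Submodule ℝ (EuclideanSpace ℝ (Fin m))) :
    ∑ j, ‖prL L (EuclideanSpace.single j 1)‖ ^ 2 = Module.finrank ℝ L :=
  sum_norm_sq_proj_single L

lemma euclid_sum_apply {n : ℕ} {ι : Type*} (s : Finset ι)
    (f : ι → EuclideanSpace ℝ (Fin n)) (j : Fin n) :
    (∑ i ∈ s, f i) j = ∑ i ∈ s, f i j := by
  classical
  induction s using Finset.cons_induction with
  | empty => rfl
  | cons a s ha ih => rw [Finset.sum_cons, Finset.sum_cons, PiLp.add_apply, ih]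

lemma euclid_inner_real {n : ℕ} (a b : EuclideanSpace ℝ (Fin n)) :
    (inner ℝ a b : ℝ) = ∑ i, a i * b i := by
  rw [PiLp.inner_apply]
  exact Finset.sum_congr rfl fun i _ => by simp [RCLike.inner_apply, mul_comm]

set_option maxHeartbeats 1000000 in
/-- If `k_γ(X)` is the γ-adapted-dimension of a set `X ⊆ ℝ^d`,
i.e. the minimal `k` with `X` being `(γ²k, k)`-limited, then any finite sequence of
distinct points of `X` that is `γ`-shattered by unit-norm linear separators has size
at most `3 k_γ(X) + 1`. -/
theorem fat_shattering_le_adapted_dimension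
    (d m : ℕ) (γ : ℝ) (hγ : 0 < γ)
    (X : Set (EuclideanSpace ℝ (Fin d)))
    (kγ : ℕ)
    (hkγ : kγ = sInf {k : ℕ | IsLimitedSet (γ ^ 2 * k) k X})
    (hex : ∃ k : ℕ, IsLimitedSet (γ ^ 2 * k) k X)
    (x : Fin m → EuclideanSpace ℝ (Fin d))
    (hinj : Function.Injective x) (hmem : ∀ i, x i ∈ X)
    (hshat : GammaShattered γ x) :
    m ≤ 3 * kγ + 1 := by
  classical
  by_contra hcon
  push_neg at hcon
  -- kγ realizes the infimum
  have hkmem : IsLimitedSet (γ ^ 2 * kγ) kγ X := by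
    have h := Nat.sInf_mem (s := {k : ℕ | IsLimitedSet (γ ^ 2 * k) k X}) hex
    rwa [← hkγ] at h
  obtain ⟨V, hVrank, hVb⟩ := hkmem
  set k := kγ with hk
  -- threshold-free shattering
  obtain ⟨r, hr⟩ := hshat
  have hshat' : ∀ y : Fin m → ℝ, (∀ i, y i = 1 ∨ y i = -1) →
      ∃ w : EuclideanSpace ℝ (Fin d), ‖w‖ ≤ 1 ∧ ∀ i, γ ≤ y i * ⟪w, x i⟫ := by
    intro y hy
    obtain ⟨w₁, hw₁n, hw₁⟩ := hr y hy
    obtain ⟨w₂, hw₂n, hw₂⟩ := hr (fun i => -(y i)) (fun i => by rcases hy i with h | h <;> simp [h])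
    refine ⟨(1/2 : ℝ) • (w₁ - w₂), ?_, ?_⟩
    · rw [norm_smul]
      have : ‖w₁ - w₂‖ ≤ 2 := by
        calc ‖w₁ - w₂‖ ≤ ‖w₁‖ + ‖w₂‖ := norm_sub_le _ _
          _ ≤ 2 := by linarith
      simp only [Real.norm_eq_abs]
      rw [abs_div, abs_of_pos (by norm_num : (0:ℝ) < (1:ℝ)), abs_of_pos (by norm_num : (0:ℝ) < (2:ℝ))]
      linarith
    · intro i
      have h1 := hw₁ i
      have h2 := hw₂ i
      rw [real_inner_smul_left, inner_sub_left]
      nlinarith [h1, h2]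
  -- the projections of the points
  set v : Fin m → EuclideanSpace ℝ (Fin d) :=
    fun i => (V.orthogonalProjection (x i) : EuclideanSpace ℝ (Fin d)) with hv
  set u : Fin m → EuclideanSpace ℝ (Fin d) :=
    fun i => (Vᗮ.orthogonalProjection (x i) : EuclideanSpace ℝ (Fin d)) with hu
  have hxuv : ∀ i, x i = v i + u i := fun i =>
    (Submodule.starProjection_add_starProjection_orthogonal (K := V) (x i)).symm
  have hvb : ∀ i, ‖v i‖ ^ 2 ≤ γ ^ 2 * k := fun i => hVb _ (hmem i)
  have humem : ∀ i, u i ∈ Vᗮ := fun i => SetLike.coe_mem _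
  -- the linear maps S, T
  let S : EuclideanSpace ℝ (Fin m) →ₗ[ℝ] EuclideanSpace ℝ (Fin d) :=
    { toFun := fun c => ∑ i, c i • u i
      map_add' := fun a b => by
        simp [PiLp.add_apply, add_smul, Finset.sum_add_distrib]
      map_smul' := fun t a => by
        simp [PiLp.smul_apply, smul_smul, Finset.smul_sum] }
  let T : EuclideanSpace ℝ (Fin m) →ₗ[ℝ] EuclideanSpace ℝ (Fin d) :=
    { toFun := fun c => ∑ i, c i • v i
      map_add' := fun a b => by
        simp [PiLp.add_apply, add_smul, Finset.sum_add_distrib]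
      map_smul' := fun t a => by
        simp [PiLp.smul_apply, smul_smul, Finset.smul_sum] }
  set L : Submodule ℝ (EuclideanSpace ℝ (Fin m)) := LinearMap.ker S with hL
  set N : ℕ := Module.finrank ℝ L with hN
  -- dimension bound : m ≤ N + k
  have hdim : m ≤ N + k := by
    have hrn : Module.finrank ℝ (LinearMap.range S) + N = m := by
      rw [hN, hL, LinearMap.finrank_range_add_finrank_ker S]
      exact finrank_euclideanSpace_fin
    have hrange : LinearMap.range S ≤ Vᗮ := by
      rintro _ ⟨c, rfl⟩
      show ∑ i, c i • u i ∈ Vᗮ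
      exact Submodule.sum_mem _ fun i _ => Submodule.smul_mem _ _ (humem i)
    have h1 : Module.finrank ℝ (LinearMap.range S) ≤ Module.finrank ℝ Vᗮ :=
      Submodule.finrank_mono hrange
    have h2 : Module.finrank ℝ V + Module.finrank ℝ Vᗮ = d := by
      rw [V.finrank_add_finrank_orthogonal]
      exact finrank_euclideanSpace_fin
    omega
  -- key shattering inequality
  have hkey : ∀ c : EuclideanSpace ℝ (Fin m), c ∈ L →
      γ * ∑ i, |c i| ≤ ‖T c‖ := by
    intro c hc
    set y : Fin m → ℝ := fun i => if 0 ≤ c i then 1 else -1 with hy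
    obtain ⟨w, hwn, hw⟩ := hshat' y
      (fun i => by by_cases h : 0 ≤ c i <;> simp [hy, h])
    have hterm : ∀ i, γ * |c i| ≤ c i * ⟪w, x i⟫ := by
      intro i
      by_cases h : 0 ≤ c i
      · rw [abs_of_nonneg h]
        have h1 : γ ≤ ⟪w, x i⟫ := by
          have h2 := hw i
          simp only [hy] at h2
          rw [if_pos h] at h2
          linarith
        nlinarith
      · push_neg at h
        rw [abs_of_neg h]
        have h1 : γ ≤ -⟪w, x i⟫ := by
          have h2 := hw i
          simp only [hy] at h2
          rw [if_neg (not_le.mpr h)] at h2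
          linarith
        nlinarith
    have hsum : γ * ∑ i, |c i| ≤ ∑ i, c i * ⟪w, x i⟫ := by
      rw [Finset.mul_sum]
      exact Finset.sum_le_sum fun i _ => hterm i
    have hS0 : S c = 0 := LinearMap.mem_ker.mp hc
    have hinner : ∑ i, c i * ⟪w, x i⟫ = ⟪w, T c⟫ := by
      have hTc : T c = ∑ i, c i • x i := by
        have hsplit : ∑ i, c i • x i = T c + S c := by
          show ∑ i, c i • x i = (∑ i, c i • v i) + (∑ i, c i • u i)
          rw [← Finset.sum_add_distrib]
          refine Finset.sum_congr rfl fun i _ => ?_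
          rw [hxuv i, smul_add]
        rw [hsplit, hS0, add_zero]
      rw [hTc, inner_sum]
      refine Finset.sum_congr rfl fun i _ => ?_
      rw [real_inner_smul_right]
    have hcs : ⟪w, T c⟫ ≤ ‖T c‖ := by
      calc ⟪w, T c⟫ ≤ ‖w‖ * ‖T c‖ := real_inner_le_norm w (T c)
        _ ≤ 1 * ‖T c‖ := by nlinarith [norm_nonneg (T c), norm_nonneg w]
        _ = ‖T c‖ := one_mul _
    rw [hinner] at hsum
    linarith
  -- the main chain
  have hchain : (N : ℝ) ^ 2 ≤ (m : ℝ) * k := by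
    set P : EuclideanSpace ℝ (Fin m) →L[ℝ] EuclideanSpace ℝ (Fin m) := prL L with hP
    set e : Fin m → EuclideanSpace ℝ (Fin m) := fun j => EuclideanSpace.single j (1:ℝ) with he
    set sE : (Fin m → Bool) → EuclideanSpace ℝ (Fin m) := fun ε => WithLp.toLp 2 (fun j => sgn ε j) with hsE
    have hs_decomp : ∀ ε : Fin m → Bool, sE ε = ∑ j, sgn ε j • e j := by
      intro ε
      ext j
      rw [euclid_sum_apply]
      have hterm : ∀ j' : Fin m, (sgn ε j' • e j') j
          = if j = j' then sgn ε j' else 0 := by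
        intro j'
        rw [PiLp.smul_apply, he]
        simp only [EuclideanSpace.single_apply]
        by_cases h : j = j' <;> simp [h]
      rw [Finset.sum_congr rfl fun j' _ => hterm j']
      simp
      rfl
    have hPdecomp : ∀ ε : Fin m → Bool, P (sE ε) = ∑ j, sgn ε j • P (e j) := by
      intro ε
      rw [hs_decomp ε, map_sum]
      exact Finset.sum_congr rfl fun j _ => by rw [map_smul]
    have hTPdecomp : ∀ ε : Fin m → Bool, T (P (sE ε)) = ∑ j, sgn ε j • T (P (e j)) := by
      intro ε
      rw [hPdecomp ε, map_sum]
      exact Finset.sum_congr rfl fun j _ => by rw [map_smul]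
    have htrace : ∑ j, ‖P (e j)‖ ^ 2 = (N : ℝ) := by
      have := prL_trace L
      rw [hN]
      exact this
    have h1 : ∑ ε : Fin m → Bool, ‖P (sE ε)‖ ^ 2 = 2 ^ m * (N : ℝ) := by
      calc ∑ ε : Fin m → Bool, ‖P (sE ε)‖ ^ 2
          = ∑ ε : Fin m → Bool, ‖∑ j, sgn ε j • P (e j)‖ ^ 2 :=
            Finset.sum_congr rfl fun ε _ => by rw [hPdecomp]
        _ = 2 ^ m * ∑ j, ‖P (e j)‖ ^ 2 := sum_norm_sq_sgn_smul _
        _ = 2 ^ m * (N : ℝ) := by rw [htrace]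
    have h2 : ∀ ε : Fin m → Bool, γ * ‖P (sE ε)‖ ^ 2 ≤ ‖T (P (sE ε))‖ := by
      intro ε
      have hmemL : P (sE ε) ∈ L := prL_mem L _
      have hip : ⟪P (sE ε), sE ε⟫ = ‖P (sE ε)‖ ^ 2 := inner_prL_self L _
      have hl1 : ‖P (sE ε)‖ ^ 2 ≤ ∑ i, |(P (sE ε)) i| := by
        rw [← hip, euclid_inner_real]
        refine Finset.sum_le_sum fun i _ => ?_
        have hse : (sE ε) i = sgn ε i := rfl
        rw [hse]
        calc (P (sE ε)) i * sgn ε i ≤ |(P (sE ε)) i * sgn ε i| := le_abs_self _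
          _ = |(P (sE ε)) i| * |sgn ε i| := abs_mul _ _
          _ = |(P (sE ε)) i| := by rw [sgn_abs]; ring
      have hk2 := hkey (P (sE ε)) hmemL
      nlinarith [hl1, hk2, hγ]
    set B : ℝ := ∑ ε : Fin m → Bool, ‖T (P (sE ε))‖ with hB
    have h3 : γ * (2 ^ m * (N:ℝ)) ≤ B := by
      rw [← h1, Finset.mul_sum]
      exact Finset.sum_le_sum fun ε _ => h2 ε
    have h4 : B ^ 2 ≤ 2 ^ m * ∑ ε : Fin m → Bool, ‖T (P (sE ε))‖ ^ 2 := by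
      have hcs := Finset.sum_mul_sq_le_sq_mul_sq Finset.univ
        (fun _ : Fin m → Bool => (1:ℝ)) (fun ε => ‖T (P (sE ε))‖)
      simp only [one_mul, one_pow] at hcs
      have hcard : ∑ _ε : Fin m → Bool, (1:ℝ) = 2 ^ m := by
        rw [Finset.sum_const, Finset.card_univ]
        simp [Fintype.card_fun]
      rw [hcard] at hcs
      exact hcs
    have h5 : ∑ ε : Fin m → Bool, ‖T (P (sE ε))‖ ^ 2
        = 2 ^ m * ∑ j, ‖T (P (e j))‖ ^ 2 := by
      calc ∑ ε : Fin m → Bool, ‖T (P (sE ε))‖ ^ 2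
          = ∑ ε : Fin m → Bool, ‖∑ j, sgn ε j • T (P (e j))‖ ^ 2 :=
            Finset.sum_congr rfl fun ε _ => by rw [hTPdecomp]
        _ = 2 ^ m * ∑ j, ‖T (P (e j))‖ ^ 2 := sum_norm_sq_sgn_smul _
    set t : Fin d → EuclideanSpace ℝ (Fin m) := fun c => WithLp.toLp 2 (fun i => v i c) with ht
    have hT_apply : ∀ (μ : EuclideanSpace ℝ (Fin m)) (c : Fin d), (T μ) c = ⟪t c, μ⟫ := by
      intro μ c
      rw [euclid_inner_real]
      show (∑ i, μ i • v i) c = ∑ i, t c i * μ i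
      rw [euclid_sum_apply]
      refine Finset.sum_congr rfl fun i _ => ?_
      rw [PiLp.smul_apply]
      show μ i * v i c = v i c * μ i
      ring
    have h6 : ∑ j, ‖T (P (e j))‖ ^ 2 ≤ (m:ℝ) * (γ^2 * k) := by
      have hcoordsum : ∀ j, ‖T (P (e j))‖^2 = ∑ c, ((P (t c)) j)^2 := by
        intro j
        rw [← sum_coord_sq (T (P (e j)))]
        refine Finset.sum_congr rfl fun c _ => ?_
        rw [hT_apply]
        have hadj : ⟪t c, P (e j)⟫ = (P (t c)) j := by
          rw [← prL_selfadj L (t c) (e j), he]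
          rw [EuclideanSpace.inner_single_right]
          simp
          rfl
        rw [hadj]
      simp_rw [hcoordsum]
      rw [Finset.sum_comm]
      have hcol : ∀ c, ∑ j, ((P (t c)) j)^2 ≤ ∑ i, (v i c)^2 := by
        intro c
        rw [sum_coord_sq]
        have hle : ‖P (t c)‖ ≤ ‖t c‖ := norm_prL_le L (t c)
        have heq : ‖t c‖^2 = ∑ i, (v i c)^2 := by
          rw [← sum_coord_sq (t c)]
        nlinarith [norm_nonneg (P (t c)), norm_nonneg (t c)]
      calc ∑ c, ∑ j, ((P (t c)) j)^2 ≤ ∑ c, ∑ i, (v i c)^2 :=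
            Finset.sum_le_sum fun c _ => hcol c
        _ = ∑ i, ∑ c, (v i c)^2 := Finset.sum_comm
        _ = ∑ i, ‖v i‖^2 := Finset.sum_congr rfl fun i _ => sum_coord_sq (v i)
        _ ≤ ∑ _i : Fin m, γ^2*(k:ℝ) := Finset.sum_le_sum fun i _ => hvb i
        _ = (m:ℝ) * (γ^2*k) := by
            rw [Finset.sum_const, Finset.card_univ]
            simp [nsmul_eq_mul]
    set C : ℝ := 2 ^ m with hC
    have hC0 : (0:ℝ) < C := by rw [hC]; positivity
    have hBnn : 0 ≤ B := Finset.sum_nonneg fun ε _ => norm_nonneg _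
    have hLHS : 0 ≤ γ * (C * (N:ℝ)) := by positivity
    have hsq : (γ * (C * (N:ℝ)))^2 ≤ B^2 := by nlinarith [h3, hLHS, hBnn]
    have hfin : (γ * (C * (N:ℝ)))^2 ≤ C * (C * ((m:ℝ) * (γ^2*k))) := by
      calc (γ * (C * (N:ℝ)))^2 ≤ B^2 := hsq
        _ ≤ C * ∑ ε : Fin m → Bool, ‖T (P (sE ε))‖ ^ 2 := h4
        _ = C * (C * ∑ j, ‖T (P (e j))‖ ^ 2) := by rw [h5]
        _ ≤ C * (C * ((m:ℝ)*(γ^2*k))) :=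
            mul_le_mul_of_nonneg_left
              (mul_le_mul_of_nonneg_left h6 (le_of_lt hC0)) (le_of_lt hC0)
    have hC20 : (0:ℝ) < C^2 := by positivity
    have hcancel : γ^2 * (N:ℝ)^2 ≤ (m:ℝ) * (γ^2*k) := by
      have hmul : (γ^2 * (N:ℝ)^2) * C^2 ≤ ((m:ℝ) * (γ^2*k)) * C^2 := by nlinarith [hfin]
      exact le_of_mul_le_mul_right hmul hC20
    have hγ2 : (0:ℝ) < γ^2 := by positivity
    have hfinal : γ^2 * (N:ℝ)^2 ≤ γ^2 * ((m:ℝ)*k) := by nlinarith [hcancel]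
    exact le_of_mul_le_mul_left hfinal hγ2
  -- final arithmetic
  have hmk : (m : ℝ) ≤ (N : ℝ) + k := by exact_mod_cast hdim
  have hm3 : (3 * (k : ℝ) + 1) < m := by exact_mod_cast hcon
  have hN0 : (0:ℝ) ≤ N := Nat.cast_nonneg N
  have hk0 : (0:ℝ) ≤ k := Nat.cast_nonneg k
  nlinarith [hchain, hmk, hm3, hN0, hk0, sq_nonneg ((m:ℝ) - k - N)]
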